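/- Let b : ℝ² → ℝ be continuously differentiable. Define a : ℝ² → ℝ² by a(x) := (∫₀¹ s · b(s x) ds) · (−x₂, x₁). Then a is differentiable on ℝ² and its curl equals b, i.e. ∂₁a₂(x) − ∂₂a₁(x) = b(x) for every x ∈ ℝ². -/

import Mathlib

open MeasureTheory

section aux



/-- derivative of the radial integral -/
theorem hF (b : ℝ × ℝ → ℝ) (hb : ContDiff ℝ 1 b) (x : ℝ × ℝ) :
    HasFDerivAt (fun y : ℝ × ℝ => ∫ s in (0:ℝ)..1, s * b (s • y))
      (∫ s in (0:ℝ)..1, (s * s) • fderiv ℝ b (s • x)) x := by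
  have hbc : Continuous b := hb.continuous
  obtain ⟨C, hC⟩ := (isCompact_closedBall (0 : ℝ × ℝ) (‖x‖ + 1)).exists_bound_of_continuousOn
    ((hb.continuous_fderiv one_ne_zero).continuousOn)
  have hdiff : ∀ s : ℝ, ∀ y : ℝ × ℝ,
      HasFDerivAt (fun y : ℝ × ℝ => s * b (s • y)) ((s * s) • fderiv ℝ b (s • y)) y := by
    intro s y
    have h1 : HasFDerivAt (fun y : ℝ × ℝ => s • y)
        (s • ContinuousLinearMap.id ℝ (ℝ × ℝ)) y := (hasFDerivAt_id y).const_smul s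
    have h2 : HasFDerivAt b (fderiv ℝ b (s • y)) (s • y) :=
      (hb.differentiable one_ne_zero (s • y)).hasFDerivAt
    have h3 := (h2.comp y h1).const_mul s
    refine h3.congr_fderiv ?_
    refine ContinuousLinearMap.ext fun v => ?_
    simp [Function.comp, _root_.map_smul, smul_eq_mul, mul_comm, mul_assoc, mul_left_comm]
  apply intervalIntegral.hasFDerivAt_integral_of_dominated_of_fderiv_le
    (F' := fun (y : ℝ × ℝ) (s : ℝ) => (s*s) • fderiv ℝ b (s • y)) (s := Metric.ball x 1) (bound := fun _ => C) (Metric.ball_mem_nhds x one_pos)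
  · filter_upwards with y
    exact (Continuous.aestronglyMeasurable (continuous_id.mul (hbc.comp (continuous_id.smul continuous_const))))
  · exact (Continuous.intervalIntegrable (continuous_id.mul (hbc.comp (continuous_id.smul continuous_const)))) _ _
  · exact (Continuous.aestronglyMeasurable (by
      exact ((continuous_id.mul continuous_id).smul
        ((hb.continuous_fderiv one_ne_zero).comp (continuous_id.smul continuous_const)))))
  · filter_upwards with s
    intro hs y hy
    have hs' : s ∈ Set.Ioc (0:ℝ) 1 := by
      simpa [Set.uIoc_of_le (zero_le_one)] using hs
    have h1 : ‖(s * s) • fderiv ℝ b (s • y)‖ ≤ ‖fderiv ℝ b (s • y)‖ := by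
      rw [norm_smul]
      have : |s * s| ≤ 1 := by
        rw [abs_mul]
        nlinarith [hs'.1, hs'.2, abs_of_pos hs'.1]
      calc ‖(s*s)‖ * ‖fderiv ℝ b (s • y)‖ ≤ 1 * ‖fderiv ℝ b (s • y)‖ := by
            apply mul_le_mul_of_nonneg_right _ (norm_nonneg _); simpa using this
        _ = _ := one_mul _
    refine h1.trans (hC _ ?_)
    rw [Metric.mem_closedBall]
    have : ‖s • y‖ ≤ ‖y‖ := by
      rw [norm_smul]
      calc ‖s‖ * ‖y‖ ≤ 1 * ‖y‖ := by
            apply mul_le_mul_of_nonneg_right _ (norm_nonneg _)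
            simpa [Real.norm_eq_abs, abs_of_pos hs'.1] using hs'.2
        _ = ‖y‖ := one_mul _
    have hy' : ‖y‖ ≤ ‖x‖ + 1 := by
      have h1 := norm_sub_norm_le y x
      have h2 : ‖y - x‖ < 1 := by simpa [dist_eq_norm] using Metric.mem_ball.mp hy
      linarith
    simpa [dist_eq_norm] using this.trans hy'
  · exact intervalIntegrable_const
  · filter_upwards with s
    intro _ y _
    exact hdiff s y

end aux

theorem key (b : ℝ × ℝ → ℝ) (hb : ContDiff ℝ 1 b) (x : ℝ × ℝ) :
    (∫ s in (0:ℝ)..1, (s * s) • fderiv ℝ b (s • x)) x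
      = b x - 2 * ∫ s in (0:ℝ)..1, s * b (s • x) := by
  have hbc : Continuous b := hb.continuous
  have hfc : Continuous (fderiv ℝ b) := hb.continuous_fderiv one_ne_zero
  have hL : IntervalIntegrable (fun s : ℝ => (s * s) • fderiv ℝ b (s • x))
      MeasureTheory.volume 0 1 :=
    (Continuous.intervalIntegrable ((continuous_id.mul continuous_id).smul
      (hfc.comp (continuous_id.smul continuous_const)))) _ _
  have happ := ContinuousLinearMap.intervalIntegral_apply hL x
  rw [happ]
  have hg : ∀ s : ℝ, HasDerivAt (fun t : ℝ => t * t * b (t • x))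
      ((1 * s + s * 1) * b (s • x) + s * s * (fderiv ℝ b (s • x) x)) s := by
    intro s
    have hinner : HasDerivAt (fun t : ℝ => t • x) x s := by
      simpa using (hasDerivAt_id s).smul_const x
    have hbs : HasDerivAt (fun t : ℝ => b (t • x)) (fderiv ℝ b (s • x) x) s :=
      (hb.differentiable one_ne_zero (s • x)).hasFDerivAt.comp_hasDerivAt s hinner
    exact ((hasDerivAt_id s).mul (hasDerivAt_id s)).mul hbs
  have hcont : Continuous fun s : ℝ =>
      (1 * s + s * 1) * b (s • x) + s * s * (fderiv ℝ b (s • x) x) :=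
    (((continuous_const.mul continuous_id).add (continuous_id.mul continuous_const)).mul
      (hbc.comp (continuous_id.smul continuous_const))).add
      ((continuous_id.mul continuous_id).mul
        ((hfc.comp (continuous_id.smul continuous_const)).clm_apply continuous_const))
  have hftc := intervalIntegral.integral_eq_sub_of_hasDerivAt (a := (0:ℝ)) (b := 1)
    (fun s _ => hg s) (hcont.intervalIntegrable _ _)
  · -- hftc : ∫ deriv = g 1 - g 0 = b x
    have h1 : IntervalIntegrable (fun s : ℝ => (1 * s + s * 1) * b (s • x))
        MeasureTheory.volume 0 1 :=
      (Continuous.intervalIntegrable (by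
        exact ((continuous_const.mul continuous_id).add
          (continuous_id.mul continuous_const)).mul
          (hbc.comp (continuous_id.smul continuous_const)))) _ _
    have h2 : IntervalIntegrable (fun s : ℝ => s * s * (fderiv ℝ b (s • x) x))
        MeasureTheory.volume 0 1 :=
      (Continuous.intervalIntegrable ((continuous_id.mul continuous_id).mul
        ((hfc.comp (continuous_id.smul continuous_const)).clm_apply continuous_const))) _ _
    rw [intervalIntegral.integral_add h1 h2] at hftc
    simp only [one_mul, mul_one] at hftc
    have hsum : (∫ s in (0:ℝ)..1, (s + s) * b (s • x))
        = 2 * ∫ s in (0:ℝ)..1, s * b (s • x) := by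
      rw [← intervalIntegral.integral_const_mul]
      congr 1
      funext s
      ring
    have happeq : (∫ s in (0:ℝ)..1, ((s * s) • fderiv ℝ b (s • x)) x)
        = ∫ s in (0:ℝ)..1, s * s * (fderiv ℝ b (s • x) x) := rfl
    rw [happeq]
    rw [hsum] at hftc
    simp only [one_mul, mul_one, one_smul, zero_mul, mul_zero, zero_smul] at hftc
    -- hftc : 2 * ∫ ... + ∫ ... = b x - 0
    linarith [hftc]

/-- The transversal (Poincaré) gauge `a(x) = (∫₀¹ s b(sx) ds) • (-x₂, x₁)` is a vector
potential for `b`: it is differentiable and `curl a = b`. -/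
theorem stmt_2 (b : ℝ × ℝ → ℝ) (hb : ContDiff ℝ 1 b)
    (a : ℝ × ℝ → ℝ × ℝ)
    (ha : ∀ x : ℝ × ℝ, a x = (∫ s in (0:ℝ)..1, s * b (s • x)) • (-x.2, x.1)) :
    Differentiable ℝ a ∧
    ∀ x : ℝ × ℝ,
      fderiv ℝ (fun y => (a y).2) x (1, 0) - fderiv ℝ (fun y => (a y).1) x (0, 1) = b x := by
  set F : ℝ × ℝ → ℝ := fun y => ∫ s in (0:ℝ)..1, s * b (s • y) with hFdef
  have hFd : ∀ x, HasFDerivAt F (∫ s in (0:ℝ)..1, (s * s) • fderiv ℝ b (s • x)) x :=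
    fun x => hF b hb x
  have ha2 : (fun y => (a y).2) = fun y => F y * y.1 := by
    funext y; rw [ha y]; simp [hFdef]
  have ha1 : (fun y => (a y).1) = fun y => F y * (-y.2) := by
    funext y; rw [ha y]; simp [hFdef]
  constructor
  · have : a = fun y => F y • (-y.2, y.1) := funext ha
    rw [this]
    exact fun x => ((hFd x).differentiableAt).smul
      ((differentiable_snd.neg.prodMk differentiable_fst) x)
  · intro x
    set L : ℝ × ℝ →L[ℝ] ℝ := ∫ s in (0:ℝ)..1, (s * s) • fderiv ℝ b (s • x) with hLdef
    have h2 : HasFDerivAt (fun y : ℝ × ℝ => F y * y.1)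
        (F x • ContinuousLinearMap.fst ℝ ℝ ℝ + x.1 • L) x :=
      (hFd x).mul ((ContinuousLinearMap.fst ℝ ℝ ℝ).hasFDerivAt)
    have h1 : HasFDerivAt (fun y : ℝ × ℝ => F y * (-y.2))
        (F x • (-(ContinuousLinearMap.snd ℝ ℝ ℝ)) + (-x.2) • L) x :=
      (hFd x).mul ((ContinuousLinearMap.snd ℝ ℝ ℝ).hasFDerivAt.neg)
    rw [ha2, ha1, h2.fderiv, h1.fderiv]
    have hLx : L x = x.1 * L (1, 0) + x.2 * L (0, 1) := by
      have hx : x = x.1 • ((1:ℝ), (0:ℝ)) + x.2 • ((0:ℝ), (1:ℝ)) := by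
        simp [Prod.ext_iff]
      conv_lhs => rw [hx]
      rw [map_add, _root_.map_smul, _root_.map_smul]
      simp [smul_eq_mul]
    have hkey : L x = b x - 2 * F x := key b hb x
    simp only [ContinuousLinearMap.add_apply, ContinuousLinearMap.smul_apply,
      ContinuousLinearMap.coe_fst', ContinuousLinearMap.neg_apply,
      ContinuousLinearMap.coe_snd', smul_eq_mul]
    linarith [hkey, hLx]
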